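/- arXiv:1807.01501 — 2 statements merged into one kernel-verified Lean document; each statement's English description precedes it below -/
import Mathlib

section
/- If T₁ and T₂ are definitionally equivalent theories, then they have the same conceptual size: Cz(T₁) = Cz(T₂). -/
open FirstOrder Language Cardinal

/-- A translation between the formulas (with free variables among `v₀, v₁, …`) of two
languages: a map commuting with equalities of variables, the Boolean connectives and
quantification. -/
structure Translation (L₁ L₂ : FirstOrder.Language.{0,0}) where
  toFun : ∀ {n : ℕ}, L₁.BoundedFormula ℕ n → L₂.BoundedFormula ℕ n
  map_falsum : ∀ {n : ℕ},
    toFun (BoundedFormula.falsum : L₁.BoundedFormula ℕ n) = BoundedFormula.falsum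
  map_eq : ∀ {n : ℕ} (i j : ℕ ⊕ Fin n),
    toFun (Term.bdEqual (Term.var i) (Term.var j)) = Term.bdEqual (Term.var i) (Term.var j)
  map_imp : ∀ {n : ℕ} (φ ψ : L₁.BoundedFormula ℕ n),
    toFun (φ.imp ψ) = (toFun φ).imp (toFun ψ)
  map_all : ∀ {n : ℕ} (φ : L₁.BoundedFormula ℕ (n + 1)), toFun φ.all = (toFun φ).all

/-- A translation is an interpretation of `T₁` into `T₂` if it maps theorems to theorems. -/
def Translation.IsInterpretation {L₁ L₂ : FirstOrder.Language.{0,0}} (tr : Translation L₁ L₂)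
    (T₁ : L₁.Theory) (T₂ : L₂.Theory) : Prop :=
  ∀ {n : ℕ} (φ : L₁.BoundedFormula ℕ n), T₁ ⊨ᵇ φ → T₂ ⊨ᵇ tr.toFun φ

/-- A translation is a faithful interpretation of `T₁` into `T₂` if
`T₁ ⊨ φ ⟺ T₂ ⊨ tr(φ)`. -/
def Translation.IsFaithful {L₁ L₂ : FirstOrder.Language.{0,0}} (tr : Translation L₁ L₂)
    (T₁ : L₁.Theory) (T₂ : L₂.Theory) : Prop :=
  ∀ {n : ℕ} (φ : L₁.BoundedFormula ℕ n), T₁ ⊨ᵇ φ ↔ T₂ ⊨ᵇ tr.toFun φ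

/-- The conceptual size of a theory: the number of equivalence classes of formulas
under `T`-provable equivalence (the size of the Lindenbaum–Tarski algebra of `T`). -/
noncomputable def Cz (L : FirstOrder.Language.{0,0}) (T : L.Theory) : Cardinal :=
  #(Quot (fun φ ψ : L.Formula ℕ => T ⊨ᵇ φ.iff ψ))

namespace Translation
variable {L₁ L₂ : FirstOrder.Language.{0,0}} (tr : Translation L₁ L₂)

theorem map_not {n : ℕ} (φ : L₁.BoundedFormula ℕ n) :
    tr.toFun φ.not = (tr.toFun φ).not := by
  have hb : tr.toFun (⊥ : L₁.BoundedFormula ℕ n) = ⊥ := tr.map_falsum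
  show tr.toFun (φ.imp ⊥) = (tr.toFun φ).imp ⊥
  rw [tr.map_imp, hb]

theorem map_inf {n : ℕ} (φ ψ : L₁.BoundedFormula ℕ n) :
    tr.toFun (φ ⊓ ψ) = tr.toFun φ ⊓ tr.toFun ψ := by
  show tr.toFun ((φ.imp ψ.not).not) = _
  rw [tr.map_not, tr.map_imp, tr.map_not]
  rfl

theorem map_iff {n : ℕ} (φ ψ : L₁.BoundedFormula ℕ n) :
    tr.toFun (φ.iff ψ) = (tr.toFun φ).iff (tr.toFun ψ) := by
  unfold BoundedFormula.iff
  rw [tr.map_inf, tr.map_imp, tr.map_imp]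

end Translation

/-- Definitionally equivalent theories have the same conceptual size. -/
theorem cz_eq_of_definitional_equivalence {L₁ L₂ : FirstOrder.Language.{0,0}}
    (T₁ : L₁.Theory) (T₂ : L₂.Theory)
    (tr₁₂ : Translation L₁ L₂) (tr₂₁ : Translation L₂ L₁)
    (h₁₂ : tr₁₂.IsInterpretation T₁ T₂) (h₂₁ : tr₂₁.IsInterpretation T₂ T₁)
    (hc₁ : ∀ {n : ℕ} (φ : L₁.BoundedFormula ℕ n), T₁ ⊨ᵇ (tr₂₁.toFun (tr₁₂.toFun φ)).iff φ)
    (hc₂ : ∀ {n : ℕ} (ψ : L₂.BoundedFormula ℕ n), T₂ ⊨ᵇ (tr₁₂.toFun (tr₂₁.toFun ψ)).iff ψ) :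
    Cz L₁ T₁ = Cz L₂ T₂ := by
  have sem : ∀ {L : FirstOrder.Language.{0,0}} (T : L.Theory) {n} (φ ψ : L.BoundedFormula ℕ n),
      T ⊨ᵇ φ.iff ψ ↔ ∀ (M : T.ModelType) (v : ℕ → M) (xs : Fin n → M),
        (φ.Realize v xs ↔ ψ.Realize v xs) := by
    intro L T n φ ψ
    constructor
    · intro h M v xs
      have := h M v xs
      rwa [BoundedFormula.realize_iff] at this
    · intro h M v xs
      rw [BoundedFormula.realize_iff]
      exact h M v xs
  have r₁₂ : ∀ (φ ψ : L₁.Formula ℕ), T₁ ⊨ᵇ φ.iff ψ →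
      T₂ ⊨ᵇ (tr₁₂.toFun φ).iff (tr₁₂.toFun ψ) := by
    intro φ ψ h
    have := h₁₂ (φ.iff ψ) h
    rwa [tr₁₂.map_iff] at this
  have r₂₁ : ∀ (φ ψ : L₂.Formula ℕ), T₂ ⊨ᵇ φ.iff ψ →
      T₁ ⊨ᵇ (tr₂₁.toFun φ).iff (tr₂₁.toFun ψ) := by
    intro φ ψ h
    have := h₂₁ (φ.iff ψ) h
    rwa [tr₂₁.map_iff] at this
  apply Cardinal.mk_congr
  exact {
    toFun := Quot.map (fun φ => tr₁₂.toFun φ) r₁₂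
    invFun := Quot.map (fun φ => tr₂₁.toFun φ) r₂₁
    left_inv := by
      intro q
      induction q using Quot.ind with
      | _ φ => exact Quot.sound (hc₁ φ)
    right_inv := by
      intro q
      induction q using Quot.ind with
      | _ ψ => exact Quot.sound (hc₂ ψ) }
end

section
/- Let T and T' be first-order theories in finite relational languages over the empty base language's common reducts, and suppose that for every cardinal κ, T has a model of cardinality κ if and only if T' does. Then the conceptual distance between T and T' is finite. -/
open FirstOrder Language Cardinal

/-- The collection of all (first-order) theories, each together with its language. -/
def TheoryObj := Σ L : FirstOrder.Language.{0,0}, L.Theory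

/-- Definitional equivalence of theories: interpretations in both directions whose
compositions are provably the identity modulo the respective theories. -/
def DefEquiv (x y : TheoryObj) : Prop :=
  ∃ (t₁₂ : Translation x.1 y.1) (t₂₁ : Translation y.1 x.1),
    t₁₂.IsInterpretation x.2 y.2 ∧ t₂₁.IsInterpretation y.2 x.2 ∧
    (∀ {n : ℕ} (φ : x.1.BoundedFormula ℕ n), x.2 ⊨ᵇ (t₂₁.toFun (t₁₂.toFun φ)).iff φ) ∧
    (∀ {n : ℕ} (ψ : y.1.BoundedFormula ℕ n), y.2 ⊨ᵇ (t₁₂.toFun (t₂₁.toFun ψ)).iff ψ)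

/-- The language consisting of a single relation symbol of arity `m`. -/
def singleRelLang (m : ℕ) : FirstOrder.Language.{0,0} :=
  ⟨fun _ => Empty, fun k => if k = m then PUnit else PEmpty⟩

/-- `y` is a one-concept-extension of `x`: the language of `y` is that of `x` together
with one new relation symbol, and `y` is a conservative extension of `x`. -/
def OneConcept (x y : TheoryObj) : Prop :=
  ∃ (m : ℕ) (h : y.1 = x.1.sum (singleRelLang m)),
    ∀ φ : x.1.Sentence,
      ((show (x.1.sum (singleRelLang m)).Theory from h ▸ y.2) ⊨ᵇ
        (LHom.sumInl : x.1 →ᴸ x.1.sum (singleRelLang m)).onSentence φ) ↔ x.2 ⊨ᵇ φ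

/-- `x` and `y` are separated by at most one concept. -/
def OneConceptStep (x y : TheoryObj) : Prop :=
  OneConcept x y ∨ OneConcept y x

/-- Paths in a cluster network: `E`-steps cost 0, `S`-steps cost 1. -/
inductive Reach {X : Type*} (E S : X → X → Prop) : X → X → ℕ → Prop
  | refl (a : X) : Reach E S a a 0
  | estep {a b c : X} {n : ℕ} : E a b → Reach E S b c n → Reach E S a c n
  | sstep {a b c : X} {n : ℕ} : S a b → Reach E S b c n → Reach E S a c (n + 1)

/-- The conceptual distance between two theories: the minimum number of concepts
separating them, i.e. the step distance on the cluster network whose equivalence is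
definitional equivalence and whose one-step relation is separation by one concept. -/
noncomputable def conceptualDist (x y : TheoryObj) : ℕ∞ :=
  sInf ((↑) '' {n : ℕ | Reach DefEquiv OneConceptStep x y n})


/-! ### Auxiliary machinery -/

section Aux

/-- The translation induced by a language hom. -/
def Translation.ofLHom {L₁ L₂ : FirstOrder.Language.{0,0}} (F : L₁ →ᴸ L₂) : Translation L₁ L₂ where
  toFun := F.onBoundedFormula
  map_falsum := rfl
  map_eq := fun _ _ => rfl
  map_imp := fun _ _ => rfl
  map_all := fun _ => rfl

/-- The identity translation. -/
def Translation.idT (L : FirstOrder.Language.{0,0}) : Translation L L where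
  toFun := id
  map_falsum := rfl
  map_eq := fun _ _ => rfl
  map_imp := fun _ _ => rfl
  map_all := fun _ => rfl

theorem models_iff_self {L : FirstOrder.Language.{0,0}} (T : L.Theory) {n}
    {φ ψ : L.BoundedFormula ℕ n} (h : φ = ψ) : T ⊨ᵇ φ.iff ψ := by
  subst h
  intro M v xs
  rw [BoundedFormula.realize_iff]

theorem Reach.trans' {X : Type*} {E S : X → X → Prop} {a b c : X} {n m : ℕ}
    (h1 : Reach E S a b n) (h2 : Reach E S b c m) : ∃ k, Reach E S a c k := by
  induction h1 with
  | refl => exact ⟨m, h2⟩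
  | estep h _ ih => obtain ⟨k, hk⟩ := ih h2; exact ⟨k, .estep h hk⟩
  | sstep h _ ih => obtain ⟨k, hk⟩ := ih h2; exact ⟨k + 1, .sstep h hk⟩

theorem Reach.symm' {X : Type*} {E S : X → X → Prop} (hE : Symmetric E) (hS : Symmetric S)
    {a b : X} {n : ℕ} (h : Reach E S a b n) : ∃ k, Reach E S b a k := by
  induction h with
  | refl a => exact ⟨0, .refl a⟩
  | estep h _ ih =>
    obtain ⟨k, hk⟩ := ih
    exact hk.trans' (.estep (hE h) (.refl _))
  | sstep h _ ih =>
    obtain ⟨k, hk⟩ := ih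
    exact hk.trans' (.sstep (hS h) (.refl _))

theorem DefEquiv.symm' : Symmetric DefEquiv := by
  rintro x y ⟨t₁₂, t₂₁, h1, h2, h3, h4⟩
  exact ⟨t₂₁, t₁₂, h2, h1, h4, h3⟩

theorem OneConceptStep.symm' : Symmetric OneConceptStep := by
  rintro x y (h | h)
  · exact Or.inr h
  · exact Or.inl h

theorem modelsBF_iff_of_models_iff {L : FirstOrder.Language.{0,0}} {T T' : L.Theory}
    (h : ∀ (M : Type) (S : L.Structure M), Nonempty M →
      (@FirstOrder.Language.Theory.Model L M S T ↔ @FirstOrder.Language.Theory.Model L M S T'))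
    {α : Type} {n} (φ : L.BoundedFormula α n) : T ⊨ᵇ φ → T' ⊨ᵇ φ := by
  intro hm M v xs
  exact hm (@Theory.ModelType.mk L T M M.struc ((h M M.struc M.nonempty').2 M.is_model)
    M.nonempty') v xs

/-- Theories over the same language with the same model classes are definitionally
equivalent. -/
theorem defEquiv_of_models_iff {L : FirstOrder.Language.{0,0}} (T T' : L.Theory)
    (h : ∀ (M : Type) (S : L.Structure M), Nonempty M →
      (@FirstOrder.Language.Theory.Model L M S T ↔ @FirstOrder.Language.Theory.Model L M S T')) :
    DefEquiv ⟨L, T⟩ ⟨L, T'⟩ := by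
  refine ⟨Translation.idT L, Translation.idT L, ?_, ?_, ?_, ?_⟩
  · intro n φ hφ
    exact modelsBF_iff_of_models_iff h φ hφ
  · intro n φ hφ
    exact modelsBF_iff_of_models_iff (fun M S hne => (h M S hne).symm) φ hφ
  · intro n φ
    exact models_iff_self _ rfl
  · intro n φ
    exact models_iff_self _ rfl

/-! ### Languages built by stacking single relations -/

def langOfFn : (k : ℕ) → (Fin k → ℕ) → FirstOrder.Language.{0,0}
  | 0, _ => Language.empty
  | (k+1), f => (langOfFn k (f ∘ Fin.castSucc)).sum (singleRelLang (f (Fin.last k)))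

instance langOfFn_isRelational : ∀ (k : ℕ) (f : Fin k → ℕ), (langOfFn k f).IsRelational
  | 0, _ => inferInstanceAs Language.empty.IsRelational
  | (k+1), f => by
    have := langOfFn_isRelational k (f ∘ Fin.castSucc)
    have : (singleRelLang (f (Fin.last k))).IsRelational := fun _ => inferInstanceAs (IsEmpty Empty)
    exact inferInstanceAs ((Language.sum _ _).IsRelational)

def iteEquiv (n m : ℕ) : (if n = m then PUnit else PEmpty : Type) ≃ PLift (n = m) := by
  by_cases h : n = m
  · rw [if_pos h]
    haveI : Unique (PLift (n = m)) := ⟨⟨⟨h⟩⟩, fun _ => rfl⟩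
    exact Equiv.ofUnique _ _
  · rw [if_neg h]
    haveI : IsEmpty (PLift (n = m)) := ⟨fun p => h p.down⟩
    exact Equiv.equivOfIsEmpty _ _

def stepEquiv (k : ℕ) (f : Fin (k+1) → ℕ) (n : ℕ) :
    ({i : Fin k // f i.castSucc = n} ⊕ PLift (n = f (Fin.last k))) ≃ {i : Fin (k+1) // f i = n} where
  toFun := fun s => match s with
    | Sum.inl ⟨i, h⟩ => ⟨i.castSucc, h⟩
    | Sum.inr h => ⟨Fin.last k, h.down.symm⟩
  invFun := fun p =>
    Fin.lastCases (motive := fun i => f i = n →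
        ({i : Fin k // f i.castSucc = n} ⊕ PLift (n = f (Fin.last k))))
      (fun h => Sum.inr ⟨h.symm⟩) (fun j h => Sum.inl ⟨j, h⟩) p.1 p.2
  left_inv := by
    rintro (⟨i, h⟩ | ⟨h⟩)
    · simp
    · simp
  right_inv := by
    rintro ⟨i, h⟩
    induction i using Fin.lastCases with
    | last => simp
    | cast j => simp

def relEquiv : ∀ (k : ℕ) (f : Fin k → ℕ) (n : ℕ),
    (langOfFn k f).Relations n ≃ {i : Fin k // f i = n}
  | 0, f, n => by
    haveI : IsEmpty {i : Fin 0 // f i = n} := ⟨fun p => p.1.elim0⟩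
    haveI : IsEmpty ((langOfFn 0 f).Relations n) := inferInstanceAs (IsEmpty Empty)
    exact Equiv.equivOfIsEmpty _ _
  | (k+1), f, n =>
    ((relEquiv k (f ∘ Fin.castSucc) n).sumCongr (iteEquiv n (f (Fin.last k)))).trans
      (stepEquiv k f n)

def sigmaFiber {L : FirstOrder.Language.{0,0}} (n : ℕ) :
    L.Relations n ≃ {p : (Σ m, L.Relations m) // p.1 = n} where
  toFun R := ⟨⟨n, R⟩, rfl⟩
  invFun p := p.2 ▸ p.1.2
  left_inv R := rfl
  right_inv := by rintro ⟨⟨m, R⟩, rfl⟩; rfl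

/-! ### Language homs built from relation maps -/

section
variable {L L' : FirstOrder.Language.{0,0}}

def mkLHom (hL : L.IsRelational) (r : ∀ n, L.Relations n → L'.Relations n) : L →ᴸ L' where
  onFunction := fun {n} fn => ((hL n).false fn).elim
  onRelation := fun {n} R => r n R

theorem mkLHom_comp (hL : L.IsRelational) (hL' : L'.IsRelational)
    (r : ∀ n, L.Relations n → L'.Relations n) (r' : ∀ n, L'.Relations n → L.Relations n)
    (hrr : ∀ n R, r' n (r n R) = R) :
    (mkLHom hL' r').comp (mkLHom hL r) = LHom.id L := by
  apply LHom.funext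
  · ext n fn
    exact ((hL n).false fn).elim
  · ext n R
    exact hrr n R

theorem isExpansionOn_reduct_inv (F : L →ᴸ L') (G : L' →ᴸ L) (hGF : G.comp F = LHom.id L)
    (N : Type) [S : L.Structure N] :
    @LHom.IsExpansionOn L L' F N S (G.reduct N) := by
  letI : L'.Structure N := G.reduct N
  constructor
  · intro n f xs
    have h : G.onFunction (F.onFunction f) = f :=
      congrFun (congrArg (fun h => @LHom.onFunction _ _ h n) hGF) f
    show Structure.funMap (G.onFunction (F.onFunction f)) xs = Structure.funMap f xs
    rw [h]
  · intro n R xs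
    have h : G.onRelation (F.onRelation R) = R :=
      congrFun (congrArg (fun h => @LHom.onRelation _ _ h n) hGF) R
    show Structure.RelMap (G.onRelation (F.onRelation R)) xs = Structure.RelMap R xs
    rw [h]

theorem defEquiv_onTheory (F : L →ᴸ L') (G : L' →ᴸ L)
    (hGF : G.comp F = LHom.id L) (hFG : F.comp G = LHom.id L')
    (T : L.Theory) : DefEquiv ⟨L, T⟩ ⟨L', F.onTheory T⟩ := by
  refine ⟨Translation.ofLHom F, Translation.ofLHom G, ?_, ?_, ?_, ?_⟩
  · intro n φ h M v xs
    letI : L.Structure M := F.reduct M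
    haveI : T.Model M := (F.onTheory_model T).1 M.is_model
    exact (F.realize_onBoundedFormula φ).2 (h (@Theory.ModelType.mk L T M _ _ M.nonempty') v xs)
  · intro n ψ h M v xs
    letI : L'.Structure M := G.reduct M
    haveI hexp : F.IsExpansionOn M := isExpansionOn_reduct_inv F G hGF M
    haveI : (F.onTheory T).Model M := (F.onTheory_model T).2 M.is_model
    exact (G.realize_onBoundedFormula ψ).2
      (h (@Theory.ModelType.mk L' (F.onTheory T) M _ _ M.nonempty') v xs)
  · intro n φ
    apply models_iff_self
    show (G.onBoundedFormula (F.onBoundedFormula φ)) = φ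
    have := congrFun (LHom.comp_onBoundedFormula (α := ℕ) (n := n) G F).symm φ
    simp only [Function.comp_apply] at this
    rw [this, hGF, LHom.id_onBoundedFormula]
    rfl
  · intro n ψ
    apply models_iff_self
    show (F.onBoundedFormula (G.onBoundedFormula ψ)) = ψ
    have := congrFun (LHom.comp_onBoundedFormula (α := ℕ) (n := n) F G).symm ψ
    simp only [Function.comp_apply] at this
    rw [this, hFG, LHom.id_onBoundedFormula]
    rfl
end

/-! ### One-concept restriction steps -/

def restrictTh (L : FirstOrder.Language.{0,0}) (m : ℕ)
    (T : (L.sum (singleRelLang m)).Theory) : L.Theory :=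
  {φ | T ⊨ᵇ (LHom.sumInl : L →ᴸ L.sum (singleRelLang m)).onSentence φ}

theorem oneConcept_restrict (L : FirstOrder.Language.{0,0}) (m : ℕ)
    (T : (L.sum (singleRelLang m)).Theory) :
    OneConcept ⟨L, restrictTh L m T⟩ ⟨L.sum (singleRelLang m), T⟩ := by
  refine ⟨m, rfl, fun φ => ?_⟩
  constructor
  · intro h
    exact Theory.models_sentence_of_mem (show φ ∈ restrictTh L m T from h)
  · intro h
    rw [Theory.models_sentence_iff] at h ⊢
    intro M
    letI : L.Structure M := (LHom.sumInl : L →ᴸ L.sum (singleRelLang m)).reduct M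
    haveI := LHom.isExpansionOn_reduct (LHom.sumInl : L →ᴸ L.sum (singleRelLang m)) M
    haveI : (restrictTh L m T).Model M := by
      constructor
      intro ψ hψ
      exact (LHom.realize_onSentence (M := M) (LHom.sumInl : L →ᴸ L.sum (singleRelLang m)) ψ).1
        (Theory.models_sentence_iff.1 hψ M)
    exact (LHom.realize_onSentence (M := M) (LHom.sumInl : L →ᴸ L.sum (singleRelLang m)) φ).2
      (h (@Theory.ModelType.mk L (restrictTh L m T) M _ _ M.nonempty'))

end Aux


section Chain

/-- Realization of empty-language sentences is independent of the structure. -/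
theorem realize_empty_irrel {M : Type} (S1 S2 : Language.empty.Structure M)
    (ψ : Language.empty.Sentence) :
    @Sentence.Realize _ M S1 ψ ↔ @Sentence.Realize _ M S2 ψ := by
  rw [Subsingleton.elim S1 S2]

theorem realize_onSentence_empty {L' : FirstOrder.Language.{0,0}} (M : Type) [L'.Structure M]
    (ψ : Language.empty.Sentence) :
    M ⊨ (LHom.ofIsEmpty Language.empty L').onSentence ψ ↔
      @Sentence.Realize _ M Language.emptyStructure ψ := by
  letI : Language.empty.Structure M := Language.emptyStructure
  exact LHom.realize_onSentence (M := M) _ ψ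

/-- The chain lemma: any theory over a stacked language is reachable from a theory over the
empty language, whose membership is characterized by truth in all models. -/
theorem chainLemma : ∀ (k : ℕ) (f : Fin k → ℕ) (T : (langOfFn k f).Theory),
    ∃ B : Language.empty.Theory,
      (∃ n, Reach DefEquiv OneConceptStep (⟨Language.empty, B⟩ : TheoryObj)
        (⟨langOfFn k f, T⟩ : TheoryObj) n) ∧
      ∀ ψ : Language.empty.Sentence,
        ψ ∈ B ↔ ∀ (M : Theory.ModelType.{0,0,0} T),
          @Sentence.Realize _ M Language.emptyStructure ψ
  | 0, f, T => by
    refine ⟨{ψ | ∀ (M : Theory.ModelType.{0,0,0} T),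
      @Sentence.Realize _ M Language.emptyStructure ψ}, ?_, fun ψ => Iff.rfl⟩
    refine ⟨0, .estep ?_ (.refl _)⟩
    have : langOfFn 0 f = Language.empty := rfl
    refine defEquiv_of_models_iff _ (show Language.empty.Theory from T) ?_
    intro M S hne
    constructor
    · intro hM
      constructor
      intro σ hσ
      have hmem : σ ∈ {ψ | ∀ (M : Theory.ModelType.{0,0,0} T),
          @Sentence.Realize _ M Language.emptyStructure ψ} := by
        intro N
        haveI := N.is_model
        exact (realize_empty_irrel _ _ σ).1 (Theory.realize_sentence_of_mem (M := N) T hσ)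
      exact (realize_empty_irrel _ _ σ).1 (hM.realize_of_mem σ hmem)
    · intro hM
      constructor
      intro σ hσ
      exact (realize_empty_irrel _ _ σ).1
        (hσ (@Theory.ModelType.mk Language.empty T M S hM hne))
  | (k+1), f, T => by
    set L' := langOfFn k (f ∘ Fin.castSucc) with hL'
    set m := f (Fin.last k) with hm
    have hlang : langOfFn (k+1) f = L'.sum (singleRelLang m) := rfl
    set T₀ : L'.Theory := restrictTh L' m T with hT₀
    obtain ⟨B, ⟨n, hreach⟩, hchar⟩ := chainLemma k (f ∘ Fin.castSucc) T₀
    refine ⟨B, ?_, ?_⟩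
    · refine (hreach.trans' (.sstep (Or.inl (oneConcept_restrict L' m T)) (.refl _))).imp ?_
      exact fun _ h => h
    · intro ψ
      rw [hchar ψ]
      constructor
      · -- from all models of T₀ to all models of T
        intro h M
        letI : (L'.sum (singleRelLang m)).Structure M := M.struc
        letI : L'.Structure M := (LHom.sumInl : L' →ᴸ L'.sum (singleRelLang m)).reduct M
        haveI := LHom.isExpansionOn_reduct (LHom.sumInl : L' →ᴸ L'.sum (singleRelLang m)) M
        haveI : T₀.Model M := by
          constructor
          intro χ hχ
          exact (LHom.realize_onSentence (M := M)
            (LHom.sumInl : L' →ᴸ L'.sum (singleRelLang m)) χ).1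
            (Theory.models_sentence_iff.1 hχ M)
        exact h (@Theory.ModelType.mk L' T₀ M _ _ M.nonempty')
      · intro h M
        haveI := M.is_model
        have hχ : (LHom.ofIsEmpty Language.empty L').onSentence ψ ∈ T₀ := by
          show T ⊨ᵇ (LHom.sumInl : L' →ᴸ L'.sum (singleRelLang m)).onSentence
            ((LHom.ofIsEmpty Language.empty L').onSentence ψ)
          apply Theory.models_sentence_iff.2
          intro N
          letI : (L'.sum (singleRelLang m)).Structure N := N.struc
          letI : L'.Structure N := (LHom.sumInl : L' →ᴸ L'.sum (singleRelLang m)).reduct N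
          haveI := LHom.isExpansionOn_reduct (LHom.sumInl : L' →ᴸ L'.sum (singleRelLang m)) N
          exact (LHom.realize_onSentence (M := N)
            (LHom.sumInl : L' →ᴸ L'.sum (singleRelLang m)) _).2
            ((realize_onSentence_empty (N : Type) ψ).2 (h N))
        exact (realize_onSentence_empty (M : Type) ψ).1
          (Theory.realize_sentence_of_mem (M := M) T₀ hχ)

end Chain


section Spec

theorem realize_empty_bij {M N : Type} (e : M ≃ N) (ψ : Language.empty.Sentence) :
    @Sentence.Realize _ M Language.emptyStructure ψ ↔
      @Sentence.Realize _ N Language.emptyStructure ψ := by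
  letI : Language.empty.Structure M := Language.emptyStructure
  letI : Language.empty.Structure N := Language.emptyStructure
  exact StrongHomClass.realize_sentence
    ({ toEquiv := e, map_fun' := fun {n} f => isEmptyElim f,
       map_rel' := fun {n} r => isEmptyElim r } : M ≃[Language.empty] N) ψ

theorem exists_infinite_model_of_unbounded {L : FirstOrder.Language.{0,0}} (T : L.Theory)
    (h : ∀ b : ℕ, ∃ N : Theory.ModelType.{0,0,0} T, (b : Cardinal) < #N) :
    ∃ N : Theory.ModelType.{0,0,0} T, Infinite N := by
  classical
  have hsat : (T ∪ L.infiniteTheory).IsSatisfiable := by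
    rw [Theory.isSatisfiable_iff_isFinitelySatisfiable]
    intro T0 hT0
    set g : L.Sentence → ℕ :=
      fun σ => if hn : ∃ n : ℕ, σ = Sentence.cardGe L n then hn.choose else 0 with hg
    obtain ⟨N, hN⟩ := h (T0.sup g)
    refine ⟨@Theory.ModelType.mk L _ N N.struc ?_ N.nonempty'⟩
    constructor
    intro σ hσ
    rcases hT0 hσ with hσT | hσI
    · exact Theory.realize_sentence_of_mem T hσT
    · obtain ⟨nn, rfl⟩ := hσI
      have hex : ∃ n : ℕ, Sentence.cardGe L nn = Sentence.cardGe L n := ⟨nn, rfl⟩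
      have hchoose : Sentence.cardGe L nn = Sentence.cardGe L (g (Sentence.cardGe L nn)) := by
        rw [hg]
        simp only [dif_pos hex]
        exact hex.choose_spec
      rw [hchoose, Sentence.realize_cardGe]
      refine le_trans ?_ hN.le
      have hle : g (Sentence.cardGe L nn) ≤ T0.sup g := Finset.le_sup hσ
      exact_mod_cast hle
  obtain ⟨M1⟩ := hsat
  haveI : Infinite M1 := (L.model_infiniteTheory_iff (M := M1)).1
    (M1.is_model.mono Set.subset_union_right)
  exact ⟨@Theory.ModelType.mk L T M1 M1.struc
    (M1.is_model.mono Set.subset_union_left) M1.nonempty', inferInstance⟩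

/-- The key lemma: a nonempty set models the empty-language consequences of `T` iff its
cardinality is in the spectrum of `T`. -/
theorem empty_model_iff_spec {L : FirstOrder.Language.{0,0}} (T : L.Theory) (hcard : L.card ≤ ℵ₀)
    (M : Type) (S0 : Language.empty.Structure M) (hne : Nonempty M) :
    @FirstOrder.Language.Theory.Model _ M S0 {ψ | ∀ (N : Theory.ModelType.{0,0,0} T),
        @Sentence.Realize _ N Language.emptyStructure ψ} ↔
      (∃ (N : Type) (S : L.Structure N), Nonempty N ∧ @FirstOrder.Language.Theory.Model L N S T ∧
        Cardinal.mk N = #M) := by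
  constructor
  · intro hM
    by_cases hfinM : Finite M
    · -- finite case
      by_contra hns
      push_neg at hns
      obtain ⟨k, hk⟩ := Cardinal.lt_aleph0.1 (Cardinal.lt_aleph0_of_finite M)
      set σ : Language.empty.Sentence :=
        (Sentence.cardGe Language.empty (k+1)) ⊔ (Sentence.cardGe Language.empty k).not with hσ
      have hmem : σ ∈ {ψ | ∀ (N : Theory.ModelType.{0,0,0} T),
          @Sentence.Realize _ N Language.emptyStructure ψ} := by
        intro N
        letI : Language.empty.Structure N := Language.emptyStructure
        have hNneq : #(N : Type) ≠ (k : Cardinal) := by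
          rw [← hk]
          exact fun hcon => hns N N.struc N.nonempty' N.is_model hcon
        have : (N : Type) ⊨ (Sentence.cardGe Language.empty (k+1)) ∨
            (N : Type) ⊨ (Sentence.cardGe Language.empty k).not := by
          by_cases hbig : ((k+1 : ℕ) : Cardinal) ≤ #(N : Type)
          · exact Or.inl ((Sentence.realize_cardGe (L := Language.empty) (k+1)).2 hbig)
          · refine Or.inr ?_
            rw [Sentence.realize_not, Sentence.realize_cardGe]
            push_neg at hbig
            have hNlt : #(N : Type) < ℵ₀ := lt_of_lt_of_le hbig (le_of_lt (nat_lt_aleph0 _))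
            obtain ⟨j, hj⟩ := Cardinal.lt_aleph0.1 hNlt
            rw [hj] at hbig hNneq ⊢
            have hjk : j < k + 1 := by exact_mod_cast hbig
            have hjne : j ≠ k := fun hcon => hNneq (by rw [hcon])
            have : j < k := lt_of_le_of_ne (Nat.lt_succ_iff.1 hjk) hjne
            exact_mod_cast Nat.not_le.2 this
        rcases this with hl | hr
        · exact (BoundedFormula.realize_sup).2 (Or.inl hl)
        · exact (BoundedFormula.realize_sup).2 (Or.inr hr)
      have hMσ : @Sentence.Realize _ M Language.emptyStructure σ :=
        (realize_empty_irrel S0 Language.emptyStructure σ).1 (hM.realize_of_mem σ hmem)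
      letI : Language.empty.Structure M := Language.emptyStructure
      rcases (BoundedFormula.realize_sup).1 hMσ with hl | hr
      · have : ((k+1 : ℕ) : Cardinal) ≤ #M := (Sentence.realize_cardGe (L := Language.empty) _).1 hl
        rw [hk] at this
        exact absurd this (by exact_mod_cast Nat.not_le.2 (Nat.lt_succ_self k))
      · have hnr := (Sentence.realize_not (M := M)
          (φ := Sentence.cardGe Language.empty k)).1 hr
        exact hnr ((Sentence.realize_cardGe (L := Language.empty) k).2 (by rw [hk]))
    · -- infinite case
      haveI : Infinite M := not_finite_iff_infinite.1 hfinM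
      by_cases hinf : ∃ N : Theory.ModelType.{0,0,0} T, Infinite N
      · obtain ⟨N, hN⟩ := Theory.exists_model_card_eq hinf #M (Cardinal.infinite_iff.1 inferInstance)
          (by simpa using hcard.trans (Cardinal.infinite_iff.1 inferInstance))
        exact ⟨N, N.struc, N.nonempty', N.is_model, hN⟩
      · exfalso
        have hbdd : ∃ b : ℕ, ∀ N : Theory.ModelType.{0,0,0} T, #(N : Type) ≤ (b : Cardinal) := by
          by_contra hb
          push_neg at hb
          exact hinf (exists_infinite_model_of_unbounded T hb)
        obtain ⟨b, hb⟩ := hbdd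
        have hmem : (Sentence.cardGe Language.empty (b+1)).not ∈
            {ψ | ∀ (N : Theory.ModelType.{0,0,0} T),
              @Sentence.Realize _ N Language.emptyStructure ψ} := by
          intro N
          letI : Language.empty.Structure N := Language.emptyStructure
          rw [Sentence.realize_not, Sentence.realize_cardGe]
          intro hcon
          have : ((b+1 : ℕ) : Cardinal) ≤ (b : Cardinal) := hcon.trans (hb N)
          exact absurd this (by exact_mod_cast Nat.not_le.2 (Nat.lt_succ_self b))
        have hMσ := (realize_empty_irrel S0 Language.emptyStructure _).1
          (hM.realize_of_mem _ hmem)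
        letI : Language.empty.Structure M := Language.emptyStructure
        rw [Sentence.realize_not, Sentence.realize_cardGe] at hMσ
        exact hMσ ((le_of_lt (nat_lt_aleph0 _)).trans (Cardinal.infinite_iff.1 inferInstance))
  · rintro ⟨N, S, hneN, hmod, hcardeq⟩
    obtain ⟨e⟩ := Cardinal.eq.1 hcardeq
    constructor
    intro ψ hψ
    have : @Sentence.Realize _ N Language.emptyStructure ψ :=
      hψ (@Theory.ModelType.mk L T N S hmod hneN)
    exact (realize_empty_irrel Language.emptyStructure S0 ψ).1 ((realize_empty_bij e ψ).1 this)

end Spec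


section Final

theorem card_le_aleph0_of (L : FirstOrder.Language.{0,0}) (hrel : L.IsRelational)
    (hfin : Finite (Σ n, L.Relations n)) : L.card ≤ ℵ₀ := by
  have hco : Countable L.Symbols := by
    haveI : IsEmpty (Σ l, L.Functions l) := by
      constructor
      rintro ⟨l, fl⟩
      exact (hrel l).false fl
    haveI := hfin
    infer_instance
  exact Cardinal.mk_le_aleph0

theorem langOfFn_relFinite (k : ℕ) (f : Fin k → ℕ) :
    Finite (Σ n, (langOfFn k f).Relations n) := by
  have e : (Σ n, (langOfFn k f).Relations n) ≃ (Σ n, {i : Fin k // f i = n}) :=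
    Equiv.sigmaCongrRight (fun n => relEquiv k f n)
  exact Finite.of_equiv _ (e.trans (Equiv.sigmaFiberEquiv f)).symm

/-- Connect an arbitrary theory over a finite relational language to a theory over the
empty language, with a complete characterization of the class of (empty-language) models
of the latter in terms of the spectrum of the former. -/
theorem connect_to_bottom (x : TheoryObj) (hxrel : ∀ n, IsEmpty (x.1.Functions n))
    (hxfin : Finite (Σ n, x.1.Relations n)) :
    ∃ B : Language.empty.Theory,
      (∃ n, Reach DefEquiv OneConceptStep (⟨Language.empty, B⟩ : TheoryObj) x n) ∧
      (∀ (M : Type) (S0 : Language.empty.Structure M), Nonempty M →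
        (@FirstOrder.Language.Theory.Model _ M S0 B ↔
          (∃ (N : Type) (S : x.1.Structure N), Nonempty N ∧
            @FirstOrder.Language.Theory.Model x.1 N S x.2 ∧ #N = #M))) := by
  obtain ⟨k, ⟨e⟩⟩ := Finite.exists_equiv_fin (Σ n, x.1.Relations n)
  set f : Fin k → ℕ := fun i => (e.symm i).1 with hf
  have rn : ∀ n, x.1.Relations n ≃ (langOfFn k f).Relations n := fun n =>
    (sigmaFiber n).trans ((Equiv.subtypeEquiv e (fun p => by
      rw [hf]
      simp)).trans (relEquiv k f n).symm)
  set F : x.1 →ᴸ langOfFn k f := mkLHom hxrel (fun n R => rn n R) with hF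
  set G : langOfFn k f →ᴸ x.1 :=
    mkLHom (langOfFn_isRelational k f) (fun n R => (rn n).symm R) with hG
  have hGF : G.comp F = LHom.id x.1 :=
    mkLHom_comp hxrel (langOfFn_isRelational k f) _ _ (fun n R => (rn n).symm_apply_apply R)
  have hFG : F.comp G = LHom.id (langOfFn k f) :=
    mkLHom_comp (langOfFn_isRelational k f) hxrel _ _ (fun n R => (rn n).apply_symm_apply R)
  set T' : (langOfFn k f).Theory := F.onTheory x.2 with hT'
  -- model-class correspondence
  have hmodels : ∀ (N : Type), (∃ S' : (langOfFn k f).Structure N, Nonempty N ∧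
      @FirstOrder.Language.Theory.Model _ N S' T') ↔
      (∃ S : x.1.Structure N, Nonempty N ∧ @FirstOrder.Language.Theory.Model x.1 N S x.2) := by
    intro N
    constructor
    · rintro ⟨S', hne, hmod⟩
      letI : (langOfFn k f).Structure N := S'
      letI : x.1.Structure N := F.reduct N
      haveI := hmod
      exact ⟨F.reduct N, hne, (F.onTheory_model x.2).1 hmod⟩
    · rintro ⟨S, hne, hmod⟩
      letI : x.1.Structure N := S
      letI : (langOfFn k f).Structure N := G.reduct N
      haveI : F.IsExpansionOn N := isExpansionOn_reduct_inv F G hGF N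
      haveI := hmod
      exact ⟨G.reduct N, hne, (F.onTheory_model x.2).2 hmod⟩
  obtain ⟨B, ⟨n, hreach⟩, hchar⟩ := chainLemma k f T'
  refine ⟨B, ?_, ?_⟩
  · -- reach
    have h1 : DefEquiv x ⟨langOfFn k f, T'⟩ := by
      have := defEquiv_onTheory F G hGF hFG x.2
      exact this
    obtain ⟨n2, hr2⟩ := hreach.trans' (.estep (DefEquiv.symm' h1) (.refl x))
    exact ⟨n2, hr2⟩
  · intro M S0 hneM
    have hB : B = {ψ | ∀ (N : Theory.ModelType.{0,0,0} T'),
        @Sentence.Realize _ N Language.emptyStructure ψ} := Set.ext fun ψ => hchar ψ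
    rw [hB]
    rw [empty_model_iff_spec T'
      (card_le_aleph0_of _ (langOfFn_isRelational k f) (langOfFn_relFinite k f)) M S0 hneM]
    constructor
    · rintro ⟨N, S', hne, hmod, hcardeq⟩
      obtain ⟨S, hne', hmod'⟩ := (hmodels N).1 ⟨S', hne, hmod⟩
      exact ⟨N, S, hne', hmod', hcardeq⟩
    · rintro ⟨N, S, hne, hmod, hcardeq⟩
      obtain ⟨S', hne', hmod'⟩ := (hmodels N).2 ⟨S, hne, hmod⟩
      exact ⟨N, S', hne', hmod', hcardeq⟩

end Final

/-- If two theories over finite relational languages have models of exactly the same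
cardinalities, then their conceptual distance is finite (they are connected in the
conceptual-distance cluster network). -/
theorem conceptualDist_finite_of_same_spectrum (x y : TheoryObj)
    (hxrel : ∀ n, IsEmpty (x.1.Functions n)) (hyrel : ∀ n, IsEmpty (y.1.Functions n))
    (hxfin : Finite (Σ n, x.1.Relations n)) (hyfin : Finite (Σ n, y.1.Relations n))
    (hspec : ∀ κ : Cardinal,
      (∃ (M : Type) (S : x.1.Structure M), Nonempty M ∧
        @FirstOrder.Language.Theory.Model x.1 M S x.2 ∧ #M = κ) ↔
      (∃ (M : Type) (S : y.1.Structure M), Nonempty M ∧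
        @FirstOrder.Language.Theory.Model y.1 M S y.2 ∧ #M = κ)) :
    ∃ n : ℕ, Reach DefEquiv OneConceptStep x y n := by
  obtain ⟨Bx, ⟨nx, hrx⟩, hcx⟩ := connect_to_bottom x hxrel hxfin
  obtain ⟨By, ⟨ny, hry⟩, hcy⟩ := connect_to_bottom y hyrel hyfin
  have hbot : DefEquiv ⟨Language.empty, Bx⟩ ⟨Language.empty, By⟩ := by
    apply defEquiv_of_models_iff
    intro M S hne
    rw [hcx M S hne, hcy M S hne]
    exact hspec #M
  obtain ⟨n1, h1⟩ := hrx.symm' DefEquiv.symm' OneConceptStep.symm'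
  obtain ⟨n2, h2⟩ := h1.trans' (Reach.estep hbot hry)
  exact h2.trans' (.refl y)
end
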